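/- Let K₁, K₂ ⊂ ℝ^{n₀} be disjoint compact sets such that for some c ∈ ℝ^{n₀} and linearly independent vectors v_1, …, v_{n₀} ∈ ℝ^{n₀}, K₁ is contained in the open sector S := {x ∈ ℝ^{n₀} : x = c + Σ_{j=1}^{n₀} λ_j v_j, λ_j > 0 for all j} and K₂ ⊂ ℝ^{n₀} ∖ closure(S). Then there exist an invertible matrix W₁ ∈ ℝ^{n₀×n₀}, a vector b₁ ∈ ℝ^{n₀} and q > 0 such that the one-layer map F₁(x) := ReLU(W₁ x + b₁) satisfies F₁(x) = 0 for all x ∈ K₁, while for every x ∈ K₂ the vector F₁(x) has all components nonnegative and Σ_{j=1}^{n₀} (F₁(x))^{(j)} > q; in particular F₁(K₁) and F₁(K₂) are strictly separated by the linear hyperplane {y ∈ ℝ^{n₀} : Σ_j y^{(j)} = q}. -/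

import Mathlib

noncomputable section

/-- The rectified linear unit. -/
def ReLU (t : ℝ) : ℝ := max t 0

/-- If `K₁` lies in an open sector `S` with apex `c` spanned by
linearly independent directions `v₁,…,v_{n₀}` and the compact set `K₂` avoids the
closure of `S`, then there are an invertible `W₁`, a bias `b₁` and `q > 0` such that the
layer `F₁ x = ReLU (W₁ x + b₁)` maps `K₁` to `0` while every `F₁ x`, `x ∈ K₂`, has
nonnegative components summing to more than `q`; in particular `F₁(K₁)` and `F₁(K₂)` are
strictly separated by the hyperplane `{y : ∑ j, y j = q}`. -/
theorem first_layer_separates_sector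
    (n₀ : ℕ) (K₁ K₂ : Set (Fin n₀ → ℝ))
    (hK₁ : IsCompact K₁) (hK₂ : IsCompact K₂) (hdisj : Disjoint K₁ K₂)
    (c : Fin n₀ → ℝ) (v : Fin n₀ → (Fin n₀ → ℝ)) (hv : LinearIndependent ℝ v)
    (S : Set (Fin n₀ → ℝ))
    (hS : S = {x | ∃ lam : Fin n₀ → ℝ, (∀ j, 0 < lam j) ∧ x = c + ∑ j, lam j • v j})
    (hK₁S : K₁ ⊆ S) (hK₂S : K₂ ⊆ (closure S)ᶜ) :
    ∃ (W₁ : Matrix (Fin n₀) (Fin n₀) ℝ) (b₁ : Fin n₀ → ℝ) (q : ℝ),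
      IsUnit W₁ ∧ 0 < q ∧
      (∀ x ∈ K₁, ∀ i, ReLU (W₁.mulVec x i + b₁ i) = 0) ∧
      (∀ x ∈ K₂, (∀ i, 0 ≤ ReLU (W₁.mulVec x i + b₁ i)) ∧
        q < ∑ i, ReLU (W₁.mulVec x i + b₁ i)) := by
  classical
  -- the basis formed by the `v j`
  have hcard : Fintype.card (Fin n₀) = Module.finrank ℝ (Fin n₀ → ℝ) := by
    simp [Module.finrank_fintype_fun_eq_card]
  set B : Module.Basis (Fin n₀) ℝ (Fin n₀ → ℝ) :=
    Module.Basis.mk hv (hv.span_eq_top_of_card_eq_finrank' hcard).ge with hB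
  have hBv : ∀ j, B j = v j := fun j => by
    simp [hB, Module.Basis.mk_apply]
  set e : (Fin n₀ → ℝ) ≃ₗ[ℝ] (Fin n₀ → ℝ) := B.equivFun with he
  -- reconstruction from coordinates
  have hrepr : ∀ y : Fin n₀ → ℝ, ∑ j, e y j • v j = y := by
    intro y
    have h3 : ∑ j, e y j • v j = ∑ j, e y j • B j :=
      Finset.sum_congr rfl fun j _ => by rw [hBv]
    rw [h3, ← B.equivFun_symm_apply]
    exact e.symm_apply_apply y
  have hcoord : ∀ lam : Fin n₀ → ℝ, e (∑ j, lam j • v j) = lam := by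
    intro lam
    have h2 : e.symm lam = ∑ j, lam j • B j := B.equivFun_symm_apply lam
    have h3 : (∑ j, lam j • v j) = e.symm lam := by
      rw [h2]; exact Finset.sum_congr rfl fun j _ => by rw [hBv]
    rw [h3, e.apply_symm_apply]
  set M : Matrix (Fin n₀) (Fin n₀) ℝ :=
    LinearMap.toMatrixAlgEquiv' (e : (Fin n₀ → ℝ) →ₗ[ℝ] (Fin n₀ → ℝ)) with hM
  set N : Matrix (Fin n₀) (Fin n₀) ℝ :=
    LinearMap.toMatrixAlgEquiv' (e.symm : (Fin n₀ → ℝ) →ₗ[ℝ] (Fin n₀ → ℝ)) with hN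
  have hMmul : ∀ y : Fin n₀ → ℝ, M.mulVec y = e y := by
    intro y
    rw [← Matrix.toLinAlgEquiv'_apply, hM, Matrix.toLinAlgEquiv'_toMatrixAlgEquiv']
    rfl
  have hMN : M * N = 1 := by
    apply Matrix.toLinAlgEquiv'.injective
    rw [map_mul, map_one, hM, hN, Matrix.toLinAlgEquiv'_toMatrixAlgEquiv',
      Matrix.toLinAlgEquiv'_toMatrixAlgEquiv']
    ext y
    simp
  have hNM : N * M = 1 := by
    apply Matrix.toLinAlgEquiv'.injective
    rw [map_mul, map_one, hM, hN, Matrix.toLinAlgEquiv'_toMatrixAlgEquiv',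
      Matrix.toLinAlgEquiv'_toMatrixAlgEquiv']
    ext y
    simp
  have hUnit : IsUnit (-M) :=
    ⟨⟨-M, -N, by rw [neg_mul_neg, hMN], by rw [neg_mul_neg, hNM]⟩, rfl⟩
  -- the affine coordinate function
  set F : (Fin n₀ → ℝ) → (Fin n₀ → ℝ) := fun x i => (-M).mulVec x i + (M.mulVec c) i with hF
  have hFval : ∀ x i, F x i = -(e (x - c) i) := by
    intro x i
    have : e (x - c) = e x - e c := by rw [map_sub]
    rw [hF]
    simp only [Matrix.neg_mulVec, Pi.neg_apply, hMmul, this, Pi.sub_apply]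
    ring
  -- membership in S via coordinates
  have hSmem : ∀ x, x ∈ S ↔ ∀ j, 0 < e (x - c) j := by
    intro x
    rw [hS]
    constructor
    · rintro ⟨lam, hpos, hx⟩ j
      have : x - c = ∑ j, lam j • v j := by rw [hx]; abel
      rw [this, hcoord]
      exact hpos j
    · intro hpos
      refine ⟨fun j => e (x - c) j, hpos, ?_⟩
      rw [hrepr (x - c)]
      abel
  -- nonnegative coordinates imply membership in the closure
  have hclos : ∀ x, (∀ j, 0 ≤ e (x - c) j) → x ∈ closure S := by
    intro x hx
    set u : Fin n₀ → ℝ := ∑ j, v j with hu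
    have heu : e u = fun _ => (1 : ℝ) := by
      have : u = ∑ j, (fun _ : Fin n₀ => (1 : ℝ)) j • v j := by
        rw [hu]; exact Finset.sum_congr rfl fun j _ => by simp
      rw [this, hcoord]
    have htend : Filter.Tendsto (fun t : ℝ => x + t • u) (nhdsWithin 0 (Set.Ioi 0)) (nhds x) := by
      have hc : Continuous fun t : ℝ => x + t • u :=
        continuous_const.add (continuous_id.smul continuous_const)
      have h := (hc.tendsto 0).mono_left (nhdsWithin_le_nhds (s := Set.Ioi (0:ℝ)))
      simpa using h
    refine mem_closure_of_tendsto htend ?_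
    filter_upwards [self_mem_nhdsWithin] with t ht
    rw [hSmem]
    intro j
    have hxc : x + t • u - c = (x - c) + t • u := by abel
    rw [hxc, map_add, map_smul]
    have ht' : (0 : ℝ) < t := ht
    have : e (x - c) j + t * 1 > 0 := by
      have := hx j; nlinarith
    simpa [heu] using this
  -- K₁ : all coordinates are killed by ReLU
  have hK1 : ∀ x ∈ K₁, ∀ i, ReLU (F x i) = 0 := by
    intro x hx i
    have hp : 0 < e (x - c) i := (hSmem x).1 (hK₁S hx) i
    have h0 : F x i ≤ 0 := by rw [hFval]; linarith
    unfold ReLU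
    exact max_eq_right h0
  -- on K₂ some coordinate is strictly negative
  have hK2pos : ∀ x ∈ K₂, ∃ j, 0 < F x j := by
    intro x hx
    by_contra h
    push_neg at h
    have : ∀ j, 0 ≤ e (x - c) j := by
      intro j
      have := h j
      rw [hFval] at this
      linarith
    exact hK₂S hx (hclos x this)
  -- the continuous gap function
  set g : (Fin n₀ → ℝ) → ℝ := fun x => ∑ i, ReLU (F x i) with hg
  have hReLUcont : Continuous ReLU := continuous_id.max continuous_const
  have hFcont : ∀ i, Continuous fun x => F x i := by
    intro i
    have h1 : Continuous fun x : Fin n₀ → ℝ => (-M).mulVec x :=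
      (Matrix.mulVecLin (-M)).continuous_of_finiteDimensional
    exact ((continuous_apply i).comp h1).add continuous_const
  have hgcont : Continuous g :=
    continuous_finset_sum _ fun i _ => hReLUcont.comp (hFcont i)
  have hgpos : ∀ x ∈ K₂, 0 < g x := by
    intro x hx
    obtain ⟨j, hj⟩ := hK2pos x hx
    refine Finset.sum_pos' (fun i _ => le_max_right _ _) ⟨j, Finset.mem_univ j, ?_⟩
    show (0 : ℝ) < max (F x j) 0
    exact lt_max_of_lt_left hj
  -- a uniform positive lower bound on K₂
  obtain ⟨q, hq, hqlt⟩ : ∃ q : ℝ, 0 < q ∧ ∀ x ∈ K₂, q < g x := by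
    rcases K₂.eq_empty_or_nonempty with hE | hNE
    · exact ⟨1, one_pos, fun x hx => by simp [hE] at hx⟩
    · obtain ⟨x₀, hx₀, hmin⟩ := hK₂.exists_isMinOn hNE hgcont.continuousOn
      refine ⟨g x₀ / 2, by linarith [hgpos x₀ hx₀], fun x hx => ?_⟩
      have h1 := hmin hx
      have h2 := hgpos x₀ hx₀
      calc g x₀ / 2 < g x₀ := by linarith
        _ ≤ g x := h1
  refine ⟨-M, M.mulVec c, q, hUnit, hq, ?_, ?_⟩
  · intro x hx i
    exact hK1 x hx i
  · intro x hx
    exact ⟨fun i => le_max_right _ _, hqlt x hx⟩
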